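/- Let B = {x ∈ ℝ³ : ‖x − c‖ ≤ r} be a closed ball in ℝ³ of radius r > 0 centered at c, where ‖·‖ is the Euclidean norm. Then K₀(B) = 34/105. -/

import Mathlib

open MeasureTheory Filter Topology

/-- `K₀(R) = |R|⁻³ ∫ |(x + R) ∩ R|² dx` for subsets of Euclidean 3-space. -/
noncomputable def K0E3 (R : Set (EuclideanSpace ℝ (Fin 3))) : ℝ :=
  (∫ x : EuclideanSpace ℝ (Fin 3), ((volume ((fun y => x + y) '' R ∩ R)).toReal) ^ 2) /
    ((volume R).toReal) ^ 3

open Real Pointwise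

noncomputable abbrev E3 := EuclideanSpace ℝ (Fin 3)

lemma vol_disk (ρ : ℝ) : volume {u : Fin 2 → ℝ | u 0 ^ 2 + u 1 ^ 2 ≤ ρ} = ENNReal.ofReal (π * ρ) := by
  rcases lt_or_ge ρ 0 with hρ | hρ
  · have : {u : Fin 2 → ℝ | u 0 ^ 2 + u 1 ^ 2 ≤ ρ} = ∅ := by
      ext u; simp only [Set.mem_setOf_eq, Set.mem_empty_iff_false, iff_false]
      intro h; nlinarith [sq_nonneg (u 0), sq_nonneg (u 1)]
    rw [this, measure_empty, eq_comm, ENNReal.ofReal_eq_zero]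
    nlinarith [pi_pos]
  · have e := EuclideanSpace.volume_preserving_symm_measurableEquiv_toLp (Fin 2)
    have hpre : (MeasurableEquiv.toLp 2 (Fin 2 → ℝ)).symm ⁻¹' {u : Fin 2 → ℝ | u 0 ^ 2 + u 1 ^ 2 ≤ ρ}
        = Metric.closedBall (0 : EuclideanSpace ℝ (Fin 2)) (Real.sqrt ρ) := by
      ext x
      simp only [Set.mem_preimage, Set.mem_setOf_eq, Metric.mem_closedBall, dist_zero_right]
      have hx : (MeasurableEquiv.toLp 2 (Fin 2 → ℝ)).symm x = fun i => x i := rfl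
      rw [hx]
      rw [show ‖x‖ = Real.sqrt (x 0 ^ 2 + x 1 ^ 2) by
        rw [EuclideanSpace.norm_eq]; congr 1; rw [Fin.sum_univ_two]; simp [Real.norm_eq_abs, sq_abs]]
      constructor
      · intro h; exact Real.sqrt_le_sqrt h
      · intro h
        have := Real.sqrt_le_sqrt (sq_nonneg (x 0) |>.trans (le_add_of_nonneg_right (sq_nonneg (x 1)))) -- dummy
        nlinarith [Real.sq_sqrt (by positivity : (0:ℝ) ≤ x 0 ^ 2 + x 1 ^ 2), Real.sq_sqrt hρ,
          Real.sqrt_nonneg (x 0 ^ 2 + x 1 ^ 2), Real.sqrt_nonneg ρ]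
    rw [← e.measure_preimage (by
      apply MeasurableSet.nullMeasurableSet
      exact measurableSet_le (by fun_prop) measurable_const), hpre,
      EuclideanSpace.volume_closedBall]
    simp only [Fintype.card_fin]
    rw [show ((2:ℕ):ℝ)/2 + 1 = 2 by norm_num, Real.Gamma_two]
    rw [← ENNReal.ofReal_pow (Real.sqrt_nonneg _), ← ENNReal.ofReal_mul (by positivity)]
    congr 1
    rw [Real.sq_sqrt hρ, Real.sq_sqrt pi_pos.le]
    ring

lemma gcont (r d : ℝ) : Continuous (fun t : ℝ => max (π * (r^2 - max ((t-d)^2) (t^2))) 0) := by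
  fun_prop

lemma gsupp (r d : ℝ) (hr : 0 < r) (t : ℝ) (ht : t ∉ Set.Icc (-r) r) :
    max (π * (r^2 - max ((t-d)^2) (t^2))) 0 = 0 := by
  apply max_eq_right
  have h2 := le_max_right ((t-d)^2) (t^2)
  have : r^2 ≤ t^2 := by
    simp only [Set.mem_Icc, not_and_or, not_le] at ht
    rcases ht with h | h <;> nlinarith
  nlinarith [pi_pos]

lemma real_int (r d : ℝ) (hr : 0 < r) (hd : 0 ≤ d) :
    ∫ t : ℝ, max (π * (r^2 - max ((t-d)^2) (t^2))) 0
      = π/12 * (max (2*r - d) 0)^2 * (4*r + d) := by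
  rcases le_or_gt (2*r) d with hcase | hcase
  · -- degenerate : integrand identically 0
    have h0 : ∀ t : ℝ, max (π * (r^2 - max ((t-d)^2) (t^2))) 0 = 0 := by
      intro t
      apply max_eq_right
      have : r^2 ≤ max ((t-d)^2) (t^2) := by
        rcases le_or_gt t (d/2) with h | h
        · exact le_trans (by nlinarith) (le_max_left _ _)
        · exact le_trans (by nlinarith) (le_max_right _ _)
      nlinarith [pi_pos]
    rw [max_eq_right (by linarith)]
    simp only [h0]
    simp
  · rw [max_eq_left (by linarith)]
    have hsupp : ∀ t : ℝ, t ∉ Set.Ioc (d - r) r →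
        max (π * (r^2 - max ((t-d)^2) (t^2))) 0 = 0 := by
      intro t ht
      apply max_eq_right
      simp only [Set.mem_Ioc, not_and_or, not_lt, not_le] at ht
      have : r^2 ≤ max ((t-d)^2) (t^2) := by
        rcases ht with h | h
        · exact le_trans (by nlinarith) (le_max_left _ _)
        · exact le_trans (by nlinarith) (le_max_right _ _)
      nlinarith [pi_pos]
    rw [← MeasureTheory.setIntegral_eq_integral_of_forall_compl_eq_zero hsupp,
      ← intervalIntegral.integral_of_le (by linarith : d - r ≤ r)]
    have key : ∀ (c : ℝ), ∀ t : ℝ,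
        HasDerivAt (fun t => π*(r^2*t - (t-c)^3/3)) (π*(r^2 - (t-c)^2)) t := by
      intro c t
      have h1 : HasDerivAt (fun t : ℝ => (t - c)^3) (3*(t-c)^2) t := by
        simpa using ((hasDerivAt_id t).sub_const c).fun_pow 3
      have h2 : HasDerivAt (fun t : ℝ => r^2*t) (r^2) t := by
        simpa using (hasDerivAt_id t).const_mul (r^2)
      have := (h2.sub (h1.div_const 3)).const_mul π
      convert this using 1 <;> first | rfl | (ext; simp only [Pi.sub_apply]; ring) | ring
    have hint : ∀ a b : ℝ, IntervalIntegrable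
        (fun t : ℝ => max (π * (r^2 - max ((t-d)^2) (t^2))) 0) volume a b :=
      fun a b => (gcont r d).intervalIntegrable a b
    rw [← intervalIntegral.integral_add_adjacent_intervals (b := d/2) (hint _ _) (hint _ _)]
    have congr1 : ∫ t in (d-r)..(d/2), max (π * (r^2 - max ((t-d)^2) (t^2))) 0
        = ∫ t in (d-r)..(d/2), π*(r^2 - (t-d)^2) := by
      apply intervalIntegral.integral_congr
      intro t ht
      rw [Set.uIcc_of_le (by linarith)] at ht
      obtain ⟨h1, h2⟩ := ht
      beta_reduce
      rw [show max ((t-d)^2) (t^2) = (t-d)^2 from max_eq_left (by nlinarith),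
        show max (π * (r^2 - (t-d)^2)) 0 = π * (r^2 - (t-d)^2) from
          max_eq_left (mul_nonneg pi_pos.le (by nlinarith))]
    have congr2 : ∫ t in (d/2)..r, max (π * (r^2 - max ((t-d)^2) (t^2))) 0
        = ∫ t in (d/2)..r, π*(r^2 - (t-0)^2) := by
      apply intervalIntegral.integral_congr
      intro t ht
      rw [Set.uIcc_of_le (by linarith)] at ht
      obtain ⟨h1, h2⟩ := ht
      beta_reduce
      rw [show max ((t-d)^2) (t^2) = t^2 from max_eq_right (by nlinarith),
        show max (π * (r^2 - t^2)) 0 = π * (r^2 - t^2) from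
          max_eq_left (mul_nonneg pi_pos.le (by nlinarith))]
      ring_nf
    rw [congr1, congr2,
      intervalIntegral.integral_eq_sub_of_hasDerivAt (fun t _ => key d t)
        (Continuous.intervalIntegrable (by fun_prop) _ _),
      intervalIntegral.integral_eq_sub_of_hasDerivAt (fun t _ => key 0 t)
        (Continuous.intervalIntegrable (by fun_prop) _ _)]
    ring

lemma lint_eq (r d : ℝ) (hr : 0 < r) (hd : 0 ≤ d) :
    ∫⁻ t : ℝ, ENNReal.ofReal (π * (r^2 - max ((t-d)^2) (t^2)))
      = ENNReal.ofReal (π/12 * (max (2*r - d) 0)^2 * (4*r + d)) := by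
  have hg : ∀ t : ℝ, ENNReal.ofReal (π * (r^2 - max ((t-d)^2) (t^2)))
      = ENNReal.ofReal (max (π * (r^2 - max ((t-d)^2) (t^2))) 0) := by
    intro t
    rcases le_total (π * (r^2 - max ((t-d)^2) (t^2))) 0 with h | h
    · rw [max_eq_right h, ENNReal.ofReal_zero, ENNReal.ofReal_eq_zero.mpr h]
    · rw [max_eq_left h]
  simp_rw [hg]
  have hcs : HasCompactSupport (fun t : ℝ => max (π * (r^2 - max ((t-d)^2) (t^2))) 0) :=
    HasCompactSupport.intro isCompact_Icc (gsupp r d hr)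
  rw [← MeasureTheory.ofReal_integral_eq_lintegral_ofReal
    ((gcont r d).integrable_of_hasCompactSupport hcs)
    (Filter.Eventually.of_forall fun t => le_max_right _ _),
    real_int r d hr hd]

lemma vol_inter_slice (r d : ℝ) (hr : 0 < r) :
    volume (Metric.closedBall (EuclideanSpace.single (0:Fin 3) d) r ∩ Metric.closedBall (0 : E3) r)
      = ∫⁻ t : ℝ, ENNReal.ofReal (π * (r^2 - max ((t-d)^2) (t^2))) := by
  set S3 : Set (Fin 3 → ℝ) :=
    {y | (y 0 - d)^2 + (y 1^2 + y 2^2) ≤ r^2 ∧ y 0^2 + (y 1^2 + y 2^2) ≤ r^2} with hS3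
  have hmS3 : MeasurableSet S3 := by
    rw [hS3, Set.setOf_and]
    exact (measurableSet_le (by fun_prop) measurable_const).inter
      (measurableSet_le (by fun_prop) measurable_const)
  -- step 1 : Euclidean -> pi
  have step1 : volume (Metric.closedBall (EuclideanSpace.single (0:Fin 3) d) r
      ∩ Metric.closedBall (0 : E3) r) = volume S3 := by
    have e := EuclideanSpace.volume_preserving_symm_measurableEquiv_toLp (Fin 3)
    rw [← e.measure_preimage hmS3.nullMeasurableSet]
    congr 1
    ext x
    have h1 : dist x (EuclideanSpace.single (0:Fin 3) d)
        = Real.sqrt ((x 0 - d)^2 + (x 1^2 + x 2^2)) := by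
      rw [EuclideanSpace.dist_eq, Fin.sum_univ_three]
      simp [EuclideanSpace.single_apply, Real.dist_eq, sq_abs]; ring_nf
    have h2 : dist x (0 : E3) = Real.sqrt (x 0^2 + (x 1^2 + x 2^2)) := by
      rw [EuclideanSpace.dist_eq, Fin.sum_univ_three]
      simp [Real.dist_eq, sq_abs]; ring_nf
    have hx0 : (MeasurableEquiv.toLp 2 (Fin 3 → ℝ)).symm x = fun i => x i := rfl
    simp only [Set.mem_inter_iff, Metric.mem_closedBall, Set.mem_preimage, hS3,
      Set.mem_setOf_eq, hx0, h1, h2]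
    have key : ∀ a : ℝ, 0 ≤ a → (Real.sqrt a ≤ r ↔ a ≤ r^2) := by
      intro a ha
      constructor
      · intro h; nlinarith [Real.sq_sqrt ha, Real.sqrt_nonneg a]
      · intro h; nlinarith [Real.sq_sqrt ha, Real.sqrt_nonneg a, Real.sqrt_le_sqrt h,
          Real.sqrt_sq hr.le]
    rw [key _ (by positivity), key _ (by positivity)]
  rw [step1]
  -- step 2 : pi -> prod
  have e2 := MeasureTheory.volume_preserving_piFinSuccAbove (fun _ : Fin 3 => ℝ) 0
  set T : Set (ℝ × (Fin 2 → ℝ)) :=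
    {p | (p.1 - d)^2 + (p.2 0^2 + p.2 1^2) ≤ r^2 ∧ p.1^2 + (p.2 0^2 + p.2 1^2) ≤ r^2} with hT
  have hmT : MeasurableSet T := by
    rw [hT, Set.setOf_and]
    exact (measurableSet_le (by fun_prop) measurable_const).inter
      (measurableSet_le (by fun_prop) measurable_const)
  have step2 : volume S3 = volume T := by
    rw [← e2.measure_preimage hmT.nullMeasurableSet]
    congr 1
  rw [step2]
  -- step 3 : Fubini
  rw [show (volume : Measure (ℝ × (Fin 2 → ℝ))) = (volume : Measure ℝ).prod volume from rfl,
    Measure.prod_apply hmT]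
  congr 1
  ext t
  have hslice : Prod.mk t ⁻¹' T = {u : Fin 2 → ℝ | u 0 ^ 2 + u 1 ^ 2 ≤ r^2 - max ((t-d)^2) (t^2)} := by
    ext u
    simp only [Set.mem_preimage, hT, Set.mem_setOf_eq]
    constructor
    · rintro ⟨h1, h2⟩
      rcases max_cases ((t-d)^2) (t^2) with ⟨h, _⟩ | ⟨h, _⟩ <;> rw [h] <;> linarith
    · intro h
      have := le_max_left ((t-d)^2) (t^2)
      have := le_max_right ((t-d)^2) (t^2)
      constructor <;> linarith
  rw [hslice, vol_disk, mul_sub]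

lemma vol_inter_ball (r : ℝ) (hr : 0 < r) (c x : E3) :
    volume (Metric.closedBall (x + c) r ∩ Metric.closedBall c r)
      = ENNReal.ofReal (π/12 * (max (2*r - ‖x‖) 0)^2 * (4*r + ‖x‖)) := by
  have htrans : volume (Metric.closedBall (x + c) r ∩ Metric.closedBall c r)
      = volume (Metric.closedBall x r ∩ Metric.closedBall (0:E3) r) := by
    rw [← measure_preimage_add_right volume c
      (Metric.closedBall (x + c) r ∩ Metric.closedBall c r)]
    congr 1
    ext y
    simp only [Set.preimage_inter, Set.mem_inter_iff, Set.mem_preimage, Metric.mem_closedBall]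
    simp only [dist_eq_norm, add_sub_add_right_eq_sub, add_sub_cancel_right, sub_zero]
  have hrot : volume (Metric.closedBall x r ∩ Metric.closedBall (0:E3) r)
      = volume (Metric.closedBall (EuclideanSpace.single (0:Fin 3) ‖x‖) r
          ∩ Metric.closedBall (0:E3) r) := by
    rcases eq_or_ne x 0 with rfl | hx
    · have h0 : (EuclideanSpace.single (0:Fin 3) ‖(0:E3)‖ : E3) = 0 := by
        ext i
        simp [EuclideanSpace.single_apply]
      rw [h0]
    · set y : E3 := EuclideanSpace.single (0:Fin 3) ‖x‖ with hy
      have hny : ‖y‖ = ‖x‖ := by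
        rw [hy, EuclideanSpace.norm_single, norm_norm]
      set ρ := Submodule.reflection (ℝ ∙ (y - x))ᗮ with hρ
      have hρy : ρ y = x := Submodule.reflection_sub (by rw [hny])
      have hmp := LinearIsometryEquiv.measurePreserving ρ
      rw [← hmp.measure_preimage
        ((measurableSet_closedBall.inter measurableSet_closedBall).nullMeasurableSet)]
      congr 1
      ext z
      simp only [Set.preimage_inter, Set.mem_inter_iff, Set.mem_preimage, Metric.mem_closedBall]
      constructor
      · rintro ⟨h1, h2⟩
        constructor
        · have : dist (ρ z) (ρ y) ≤ r := by rw [hρy]; exact h1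
          rwa [ρ.dist_map] at this
        · have : dist (ρ z) (ρ 0) ≤ r := by rw [map_zero]; exact h2
          rwa [ρ.dist_map] at this
      · rintro ⟨h1, h2⟩
        constructor
        · rw [← hρy, ρ.dist_map]; exact h1
        · rw [show (0:E3) = ρ 0 by rw [map_zero], ρ.dist_map]; exact h2
  rw [htrans, hrot, vol_inter_slice r ‖x‖ hr, lint_eq r ‖x‖ hr (norm_nonneg x)]

lemma gamma52 : Real.Gamma (3/2 + 1) = 3/4 * Real.sqrt π := by
  rw [Real.Gamma_add_one (by norm_num)]
  rw [show (3:ℝ)/2 = 1/2 + 1 by norm_num, Real.Gamma_add_one (by norm_num),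
    Real.Gamma_one_half_eq]
  ring

lemma vol_ball_E3 (c : E3) (r : ℝ) (hr : 0 ≤ r) :
    (volume (Metric.closedBall c r)).toReal = 4*π/3 * r^3 := by
  rw [EuclideanSpace.volume_closedBall]
  simp only [Fintype.card_fin]
  rw [show ((3:ℕ):ℝ)/2 + 1 = 3/2 + 1 by norm_num, gamma52]
  rw [ENNReal.toReal_mul, ← ENNReal.ofReal_pow hr, ENNReal.toReal_ofReal (by positivity),
    ENNReal.toReal_ofReal (by positivity)]
  have key : Real.sqrt π ^ 3 / (3/4*Real.sqrt π) = 4*π/3 := by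
    rw [pow_succ, Real.sq_sqrt pi_pos.le, div_eq_iff (by positivity)]
    ring
  rw [key]
  ring

lemma vol_ball_E3' (r : ℝ) (hr : 0 ≤ r) :
    (volume (Metric.ball (0:E3) r)).toReal = 4*π/3 * r^3 := by
  rw [← Measure.addHaar_closedBall_eq_addHaar_ball]
  exact vol_ball_E3 0 r hr

/-- for a closed ball in `ℝ³`, `K₀ = 34/105`. -/
theorem stmt_12 (c : EuclideanSpace ℝ (Fin 3)) (r : ℝ) (hr : 0 < r) :
    K0E3 (Metric.closedBall c r) = 34 / 105 := by
  unfold K0E3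
  have himg : ∀ x : E3, (fun y => x + y) '' Metric.closedBall c r
      = Metric.closedBall (x + c) r := by
    intro x
    rw [show (fun y => x + y) '' Metric.closedBall c r = x +ᵥ Metric.closedBall c r from rfl,
      Metric.vadd_closedBall, vadd_eq_add]
  have hpt : ∀ x : E3, ((volume ((fun y => x + y) '' Metric.closedBall c r
      ∩ Metric.closedBall c r)).toReal) ^ 2
      = (fun s : ℝ => (π/12 * (max (2*r - s) 0)^2 * (4*r + s))^2) ‖x‖ := by
    intro x
    rw [himg x, vol_inter_ball r hr c x, ENNReal.toReal_ofReal (by positivity)]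
  rw [show (∫ x : E3, ((volume ((fun y => x + y) '' Metric.closedBall c r
      ∩ Metric.closedBall c r)).toReal) ^ 2)
    = ∫ x : E3, (fun s : ℝ => (π/12 * (max (2*r - s) 0)^2 * (4*r + s))^2) ‖x‖ from
    integral_congr_ae (Filter.Eventually.of_forall hpt)]
  rw [integral_fun_norm_addHaar volume (fun s : ℝ => (π/12 * (max (2*r - s) 0)^2 * (4*r + s))^2)]
  rw [finrank_euclideanSpace_fin, measureReal_def, vol_ball_E3' 1 zero_le_one, vol_ball_E3 c r hr.le]
  simp only [nsmul_eq_mul, smul_eq_mul, Nat.cast_ofNat]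
  have hcont : Continuous (fun y : ℝ => y ^ (3-1) * (π/12 * (max (2*r - y) 0)^2 * (4*r + y))^2) := by
    fun_prop
  have heq0 : Set.EqOn (fun y : ℝ => y ^ (3-1) * (π/12 * (max (2*r - y) 0)^2 * (4*r + y))^2)
      0 (Set.Ioi (2*r)) := by
    intro y hy
    simp only [Set.mem_Ioi] at hy
    simp only [Pi.zero_apply]
    rw [max_eq_right (by linarith)]
    ring
  have hradial : ∫ y in Set.Ioi (0:ℝ), y ^ (3-1) * (π/12 * (max (2*r - y) 0)^2 * (4*r + y))^2
      = π^2/144 * (8704/315) * r^9 := by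
    rw [← Set.Ioc_union_Ioi_eq_Ioi (by linarith : (0:ℝ) ≤ 2*r),
      MeasureTheory.setIntegral_union (Set.Ioc_disjoint_Ioi le_rfl) measurableSet_Ioi
        (hcont.integrableOn_Ioc)
        ((integrableOn_congr_fun heq0 measurableSet_Ioi).mpr (integrableOn_zero)),
      MeasureTheory.setIntegral_congr_fun measurableSet_Ioi heq0]
    simp only [Pi.zero_apply, integral_zero, add_zero]
    rw [← intervalIntegral.integral_of_le (by linarith : (0:ℝ) ≤ 2*r)]
    have hF : ∀ s ∈ Set.uIcc (0:ℝ) (2*r), HasDerivAt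
        (fun s : ℝ => π^2/144 * (256*r^6*s^3/3 - 96*r^5*s^4 + 144*r^4*s^5/5
          + 16*r^3*s^6/3 - 24*r^2*s^7/7 + s^9/9))
        (s ^ (3-1) * (π/12 * (max (2*r - s) 0)^2 * (4*r + s))^2) s := by
      intro s hs
      rw [Set.uIcc_of_le (by linarith)] at hs
      have hD : HasDerivAt
          (fun s : ℝ => π^2/144 * (256*r^6*s^3/3 - 96*r^5*s^4 + 144*r^4*s^5/5
            + 16*r^3*s^6/3 - 24*r^2*s^7/7 + s^9/9))
          (π^2/144 * (256*r^6*s^2 - 384*r^5*s^3 + 144*r^4*s^4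
            + 32*r^3*s^5 - 24*r^2*s^6 + s^8)) s := by
        have h := (((((((hasDerivAt_pow 3 s).const_mul (256*r^6/3)).sub
          ((hasDerivAt_pow 4 s).const_mul (96*r^5))).add
          ((hasDerivAt_pow 5 s).const_mul (144*r^4/5))).add
          ((hasDerivAt_pow 6 s).const_mul (16*r^3/3))).sub
          ((hasDerivAt_pow 7 s).const_mul (24*r^2/7))).add
          ((hasDerivAt_pow 9 s).const_mul (1/9))).const_mul (π^2/144)
        convert h using 2 <;>
          first
            | rfl
            | (simp only [Pi.add_apply, Pi.sub_apply]; push_cast; ring)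
            | (push_cast; ring)
      rw [max_eq_left (by linarith [hs.2])]
      convert hD using 1
      ring
    rw [intervalIntegral.integral_eq_sub_of_hasDerivAt hF
      (Continuous.intervalIntegrable (by fun_prop) _ _)]
    ring
  rw [hradial, div_eq_iff (by positivity)]
  ring
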